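/- Let W = W̃_1·W̃_2⋯W̃_{N−r+1} (product in increasing order of indices), where the embedded factors are built from matrices W_k ∈ ℂ^{(r+1)×(r+1)} (k = 1,…,N−r) and W_{N−r+1} ∈ ℂ^{r×r}. Then W is simultaneously an upper Green matrix of order r and a lower band matrix of order r. -/

import Mathlib

open Matrix

noncomputable section

/-- `A(i,j) = 0` whenever `i - j > r` (1-based; identical in 0-based `Fin` indexing). -/
def IsLowerBand (N r : ℕ) (A : Matrix (Fin N) (Fin N) ℂ) : Prop :=
  ∀ i j : Fin N, (j : ℕ) + r < (i : ℕ) → A i j = 0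

/-- `A(i,j) = 0` whenever `j - i > r`. -/
def IsUpperBand (N r : ℕ) (A : Matrix (Fin N) (Fin N) ℂ) : Prop :=
  ∀ i j : Fin N, (i : ℕ) + r < (j : ℕ) → A i j = 0

/-- `rank B(k:N, 1:k+r-1) ≤ r` for every `k = 1, …, N-r` (1-based). -/
def IsLowerGreen (N r : ℕ) (B : Matrix (Fin N) (Fin N) ℂ) : Prop :=
  ∀ (k : ℕ) (hk1 : 1 ≤ k) (hk2 : k ≤ N - r),
    (B.submatrix
      (fun i : Fin (N - k + 1) => (⟨k - 1 + (i : ℕ), by have := i.isLt; omega⟩ : Fin N))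
      (fun j : Fin (k + r - 1) => (⟨(j : ℕ), by have := j.isLt; omega⟩ : Fin N))).rank ≤ r

/-- `rank B(1:k+r-1, k:N) ≤ r` for every `k = 1, …, N-r` (1-based). -/
def IsUpperGreen (N r : ℕ) (B : Matrix (Fin N) (Fin N) ℂ) : Prop :=
  ∀ (k : ℕ) (hk1 : 1 ≤ k) (hk2 : k ≤ N - r),
    (B.submatrix
      (fun i : Fin (k + r - 1) => (⟨(i : ℕ), by have := i.isLt; omega⟩ : Fin N))
      (fun j : Fin (N - k + 1) => (⟨k - 1 + (j : ℕ), by have := j.isLt; omega⟩ : Fin N))).rank ≤ r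

/-- `a^>_{i,s} = a(i-1) a(i-2) ⋯ a(s+1)`, equal to `I_r` when `s ≥ i - 1`. -/
def aGT (r : ℕ) (a : ℕ → Matrix (Fin r) (Fin r) ℂ) (i s : ℕ) :
    Matrix (Fin r) (Fin r) ℂ :=
  (((List.range' (s + 1) (i - 1 - s)).reverse).map a).prod

/-- `p(i) ∈ ℂ^{1×r}` (i = 1,…,N−r), `pLast = p(N−r+1) ∈ ℂ^{r×r}`, `q(j) ∈ ℂ^{r×1}`,
`a(k) ∈ ℂ^{r×r}` are lower Green generators of the `N×N` matrix `B`: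
`B(i,1:r) = p(i)·a^>_{i,0}`, `B(i,r+s-1) = p(i)·a^>_{i,s-1}·q(s-1)` for `2 ≤ s ≤ i ≤ N-r`,
and the analogous identities for the last `r` rows `B(N-r+1:N, ·)` with `pLast`. -/
def IsLowerGreenGenerators (N r : ℕ) (hNr : r < N)
    (p : ℕ → Matrix (Fin 1) (Fin r) ℂ) (q : ℕ → Matrix (Fin r) (Fin 1) ℂ)
    (a : ℕ → Matrix (Fin r) (Fin r) ℂ) (pLast : Matrix (Fin r) (Fin r) ℂ)
    (B : Matrix (Fin N) (Fin N) ℂ) : Prop :=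
  (∀ (i : ℕ) (hi1 : 1 ≤ i) (hi2 : i ≤ N - r) (j : Fin r),
      B ⟨i - 1, by omega⟩ ⟨(j : ℕ), by have := j.isLt; omega⟩ = (p i * aGT r a i 0) 0 j)
  ∧ (∀ (i : ℕ) (hi1 : 1 ≤ i) (hi2 : i ≤ N - r) (s : ℕ) (hs1 : 2 ≤ s) (hs2 : s ≤ i),
      B ⟨i - 1, by omega⟩ ⟨r + s - 2, by omega⟩
        = (p i * aGT r a i (s - 1) * q (s - 1)) 0 0)
  ∧ (∀ (t : Fin r) (j : Fin r),
      B ⟨N - r + (t : ℕ), by have := t.isLt; omega⟩ ⟨(j : ℕ), by have := j.isLt; omega⟩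
        = (pLast * aGT r a (N - r + 1) 0) t j)
  ∧ (∀ (t : Fin r) (s : ℕ) (hs1 : 2 ≤ s) (hs2 : s ≤ N - r + 1),
      B ⟨N - r + (t : ℕ), by have := t.isLt; omega⟩ ⟨r + s - 2, by omega⟩
        = (pLast * aGT r a (N - r + 1) (s - 1) * q (s - 1)) t 0)

/-- The embedded factor `I_{k-1} ⊕ M ⊕ I_{N-k-r}` (1-based block position `k`),
i.e. `M` occupies (1-based) rows and columns `k, …, k+r` of an `N×N` identity. -/
def embed (N r k : ℕ) (M : Matrix (Fin (r + 1)) (Fin (r + 1)) ℂ) :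
    Matrix (Fin N) (Fin N) ℂ :=
  Matrix.of fun i j =>
    if h : k - 1 ≤ (i : ℕ) ∧ (i : ℕ) < k + r ∧ k - 1 ≤ (j : ℕ) ∧ (j : ℕ) < k + r then
      M ⟨(i : ℕ) - (k - 1), by omega⟩ ⟨(j : ℕ) - (k - 1), by omega⟩
    else if (i : ℕ) = (j : ℕ) then 1 else 0

/-- The embedded last factor `I_{N-r} ⊕ M`. -/
def embedLast (N r : ℕ) (M : Matrix (Fin r) (Fin r) ℂ) : Matrix (Fin N) (Fin N) ℂ :=
  Matrix.of fun i j =>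
    if h : N - r ≤ (i : ℕ) ∧ N - r ≤ (j : ℕ) then
      M ⟨(i : ℕ) - (N - r), by have := i.isLt; omega⟩
        ⟨(j : ℕ) - (N - r), by have := j.isLt; omega⟩
    else if (i : ℕ) = (j : ℕ) then 1 else 0

/-- `G̃_1 · G̃_2 ⋯ G̃_{N-r}` (increasing order of indices). -/
def prodAsc (N r : ℕ) (G : ℕ → Matrix (Fin (r + 1)) (Fin (r + 1)) ℂ) :
    Matrix (Fin N) (Fin N) ℂ :=
  ((List.range' 1 (N - r)).map (fun k => embed N r k (G k))).prod

/-- `G̃_{N-r} · G̃_{N-r-1} ⋯ G̃_1` (decreasing order of indices). -/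
def prodDesc (N r : ℕ) (G : ℕ → Matrix (Fin (r + 1)) (Fin (r + 1)) ℂ) :
    Matrix (Fin N) (Fin N) ℂ :=
  (((List.range' 1 (N - r)).reverse).map (fun k => embed N r k (G k))).prod

/-- The `1×r` block `p` of the partition `M = [[p, d], [a, q]]`. -/
def blkP (r : ℕ) (M : Matrix (Fin (r + 1)) (Fin (r + 1)) ℂ) : Matrix (Fin 1) (Fin r) ℂ :=
  Matrix.of fun _ j => M 0 j.castSucc

/-- The `1×1` block `d` of the partition `M = [[p, d], [a, q]]`. -/
def blkD (r : ℕ) (M : Matrix (Fin (r + 1)) (Fin (r + 1)) ℂ) : ℂ := M 0 (Fin.last r)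

/-- The `r×r` block `a` of the partition `M = [[p, d], [a, q]]`. -/
def blkA (r : ℕ) (M : Matrix (Fin (r + 1)) (Fin (r + 1)) ℂ) : Matrix (Fin r) (Fin r) ℂ :=
  Matrix.of fun i j => M i.succ j.castSucc

/-- The `r×1` block `q` of the partition `M = [[p, d], [a, q]]`. -/
def blkQ (r : ℕ) (M : Matrix (Fin (r + 1)) (Fin (r + 1)) ℂ) : Matrix (Fin r) (Fin 1) ℂ :=
  Matrix.of fun i _ => M i.succ (Fin.last r)

/-- Assemble the `(r+1)×(r+1)` matrix `[[p, d], [a, q]]` from its blocks. -/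
def mkBlk (r : ℕ) (p : Matrix (Fin 1) (Fin r) ℂ) (d : ℂ)
    (a : Matrix (Fin r) (Fin r) ℂ) (q : Matrix (Fin r) (Fin 1) ℂ) :
    Matrix (Fin (r + 1)) (Fin (r + 1)) ℂ :=
  Matrix.of fun i j =>
    if hi : (i : ℕ) = 0 then
      if hj : (j : ℕ) < r then p 0 ⟨(j : ℕ), hj⟩ else d
    else
      if hj : (j : ℕ) < r then a ⟨(i : ℕ) - 1, by have := i.isLt; omega⟩ ⟨(j : ℕ), hj⟩
      else q ⟨(i : ℕ) - 1, by have := i.isLt; omega⟩ 0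

/-- The elementary Gauss factor `[[1, 0_{1×r}], [-f, I_r]]`. -/
def elemL (r : ℕ) (f : Matrix (Fin r) (Fin 1) ℂ) :
    Matrix (Fin (r + 1)) (Fin (r + 1)) ℂ :=
  Matrix.of fun i j =>
    if hi : (i : ℕ) = 0 then (if (j : ℕ) = 0 then 1 else 0)
    else if hj : (j : ℕ) = 0 then -f ⟨(i : ℕ) - 1, by have := i.isLt; omega⟩ 0
    else if (i : ℕ) = (j : ℕ) then 1 else 0

/-- The elementary factor `[[I_r, 0_{r×1}], [-g, 1]]`. -/
def elemLrow (r : ℕ) (g : Matrix (Fin 1) (Fin r) ℂ) :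
    Matrix (Fin (r + 1)) (Fin (r + 1)) ℂ :=
  Matrix.of fun i j =>
    if hi : (i : ℕ) < r then
      (if hj : (j : ℕ) < r then (if (i : ℕ) = (j : ℕ) then 1 else 0) else 0)
    else if hj : (j : ℕ) < r then -g 0 ⟨(j : ℕ), hj⟩ else 1

/-- All leading principal minors are nonzero. -/
def StronglyRegular (N : ℕ) (A : Matrix (Fin N) (Fin N) ℂ) : Prop :=
  ∀ (k : ℕ) (hk : k ≤ N), 1 ≤ k →
    (A.submatrix (Fin.castLE hk) (Fin.castLE hk)).det ≠ 0


namespace GreenAux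

variable {N r : ℕ}

lemma one_apply' (i j : Fin N) :
    (1 : Matrix (Fin N) (Fin N) ℂ) i j = if (i : ℕ) = (j : ℕ) then 1 else 0 := by
  rw [Matrix.one_apply]
  simp [Fin.val_eq_val]

lemma embed_apply_of_not (k : ℕ) (M : Matrix (Fin (r + 1)) (Fin (r + 1)) ℂ) (i j : Fin N)
    (h : ¬(k - 1 ≤ (i : ℕ) ∧ (i : ℕ) < k + r ∧ k - 1 ≤ (j : ℕ) ∧ (j : ℕ) < k + r)) :
    embed N r k M i j = (1 : Matrix (Fin N) (Fin N) ℂ) i j := by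
  rw [one_apply', embed]
  simp only [Matrix.of_apply, dif_neg h]

lemma embedLast_apply_of_not (M : Matrix (Fin r) (Fin r) ℂ) (i j : Fin N)
    (h : ¬(N - r ≤ (i : ℕ) ∧ N - r ≤ (j : ℕ))) :
    embedLast N r M i j = (1 : Matrix (Fin N) (Fin N) ℂ) i j := by
  rw [one_apply', embedLast]
  simp only [Matrix.of_apply, dif_neg h]

lemma mul_apply_row_one (A B : Matrix (Fin N) (Fin N) ℂ) (i j : Fin N)
    (h : ∀ t, A i t = (1 : Matrix (Fin N) (Fin N) ℂ) i t) :
    (A * B) i j = B i j := by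
  rw [Matrix.mul_apply]
  have hc : ∀ t ∈ Finset.univ, A i t * B t j = (1 : Matrix (Fin N) (Fin N) ℂ) i t * B t j :=
    fun t _ => by rw [h t]
  rw [Finset.sum_congr rfl hc, ← Matrix.mul_apply, one_mul]

lemma mul_apply_col_one (A B : Matrix (Fin N) (Fin N) ℂ) (i j : Fin N)
    (h : ∀ t, B t j = (1 : Matrix (Fin N) (Fin N) ℂ) t j) :
    (A * B) i j = A i j := by
  rw [Matrix.mul_apply]
  have hc : ∀ t ∈ Finset.univ, A i t * B t j = A i t * (1 : Matrix (Fin N) (Fin N) ℂ) t j :=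
    fun t _ => by rw [h t]
  rw [Finset.sum_congr rfl hc, ← Matrix.mul_apply, mul_one]

/-- Prefix product of the first `m` embedded factors. -/
def pfx (N r : ℕ) (Wk : ℕ → Matrix (Fin (r + 1)) (Fin (r + 1)) ℂ) (m : ℕ) :
    Matrix (Fin N) (Fin N) ℂ :=
  ((List.range' 1 m).map (fun k => embed N r k (Wk k))).prod

lemma pfx_succ (Wk : ℕ → Matrix (Fin (r + 1)) (Fin (r + 1)) ℂ) (m : ℕ) :
    pfx N r Wk (m + 1) = pfx N r Wk m * embed N r (m + 1) (Wk (m + 1)) := by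
  unfold pfx
  rw [List.range'_concat, List.map_append, List.prod_append]
  norm_num [Nat.add_comm 1 m]

/-- Joint invariant: rows `≥ m+r` are identity rows, columns `≥ m+r` are identity
columns, and the prefix product is lower banded of order `r`. -/
lemma pfx_inv (Wk : ℕ → Matrix (Fin (r + 1)) (Fin (r + 1)) ℂ) (m : ℕ) :
    (∀ i j : Fin N, m + r ≤ (i : ℕ) → pfx N r Wk m i j = (1 : Matrix (Fin N) (Fin N) ℂ) i j) ∧
    (∀ i j : Fin N, m + r ≤ (j : ℕ) → pfx N r Wk m i j = (1 : Matrix (Fin N) (Fin N) ℂ) i j) ∧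
    (∀ i j : Fin N, (j : ℕ) + r < (i : ℕ) → pfx N r Wk m i j = 0) := by
  induction m with
  | zero =>
    have h0 : pfx N r Wk 0 = 1 := by simp [pfx]
    rw [h0]
    exact ⟨fun i j _ => rfl, fun i j _ => rfl,
      fun i j hij => Matrix.one_apply_ne (by intro h; rw [h] at hij; omega)⟩
  | succ m ih =>
    obtain ⟨ihr, ihc, ihb⟩ := ih
    rw [pfx_succ]
    refine ⟨?_, ?_, ?_⟩
    · intro i j hi
      rw [mul_apply_row_one _ _ _ _ (fun t => ihr i t (by omega)),
        embed_apply_of_not _ _ _ _ (by omega)]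
    · intro i j hj
      rw [mul_apply_col_one _ _ _ _ (fun t => embed_apply_of_not _ _ t j (by omega)),
        ihc i j (by omega)]
    · intro i j hij
      rw [Matrix.mul_apply]
      apply Finset.sum_eq_zero
      intro t _
      by_cases hb : (m + 1) - 1 ≤ (t : ℕ) ∧ (t : ℕ) < (m + 1) + r ∧
          (m + 1) - 1 ≤ (j : ℕ) ∧ (j : ℕ) < (m + 1) + r
      · rw [ihr i t (by omega), Matrix.one_apply_ne (by intro h; rw [h] at hij; omega),
          zero_mul]
      · rw [embed_apply_of_not _ _ _ _ hb]
        by_cases he : t = j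
        · subst he
          rw [ihb i t hij, zero_mul]
        · rw [Matrix.one_apply_ne he, mul_zero]

/-- Rows with index `< c` are identity rows. -/
def RowId (c : ℕ) (A : Matrix (Fin N) (Fin N) ℂ) : Prop :=
  ∀ t j : Fin N, (t : ℕ) < c → A t j = (1 : Matrix (Fin N) (Fin N) ℂ) t j

lemma rowId_one (c : ℕ) : RowId (N := N) c 1 := fun _ _ _ => rfl

lemma rowId_mul {c : ℕ} {A B : Matrix (Fin N) (Fin N) ℂ}
    (hA : RowId c A) (hB : RowId c B) : RowId c (A * B) := by
  intro t j ht
  rw [mul_apply_row_one A B t j (fun s => hA t s ht), hB t j ht]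

lemma rowId_prod {c : ℕ} :
    ∀ l : List (Matrix (Fin N) (Fin N) ℂ), (∀ M ∈ l, RowId c M) → RowId c l.prod
  | [], _ => by simpa using rowId_one (N := N) c
  | M :: l, h => by
    rw [List.prod_cons]
    exact rowId_mul (h M (by simp)) (rowId_prod l (fun M' hM' => h M' (by simp [hM'])))

lemma rowId_embed (c k : ℕ) (hc : c + 1 ≤ k) (M : Matrix (Fin (r + 1)) (Fin (r + 1)) ℂ) :
    RowId (N := N) c (embed N r k M) :=
  fun t j ht => embed_apply_of_not k M t j (by omega)

lemma rowId_embedLast (c : ℕ) (hc : c ≤ N - r) (M : Matrix (Fin r) (Fin r) ℂ) :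
    RowId c (embedLast N r M) :=
  fun t j ht => embedLast_apply_of_not M t j (by omega)

lemma sum_reindex {k : ℕ} (hk2 : k - 1 + r ≤ N) (h : Fin N → ℂ)
    (h0 : ∀ t : Fin N, ((t : ℕ) < k - 1 ∨ k - 1 + r ≤ (t : ℕ)) → h t = 0) :
    ∑ t, h t = ∑ u : Fin r, h ⟨k - 1 + (u : ℕ), by have := u.isLt; omega⟩ := by
  classical
  set emb : Fin r → Fin N := fun u => ⟨k - 1 + (u : ℕ), by have := u.isLt; omega⟩ with hemb
  have hinj : ∀ x ∈ (Finset.univ : Finset (Fin r)), ∀ y ∈ Finset.univ,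
      emb x = emb y → x = y := by
    intro x _ y _ hxy
    have hv : (emb x : ℕ) = (emb y : ℕ) := congrArg Fin.val hxy
    simp only [hemb] at hv
    exact Fin.ext (by omega)
  have h2 : ∑ t ∈ Finset.univ.image emb, h t = ∑ t : Fin N, h t := by
    apply Finset.sum_subset (Finset.subset_univ _)
    intro t _ ht
    apply h0
    by_contra hcon
    push_neg at hcon
    refine ht (Finset.mem_image.mpr ⟨⟨(t : ℕ) - (k - 1), by omega⟩, Finset.mem_univ _, ?_⟩)
    simp only [hemb]
    exact Fin.ext (by simp; omega)
  rw [← h2]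
  exact Finset.sum_image hinj

end GreenAux

/-- A product `W = W̃_1·W̃_2⋯W̃_{N-r+1}` of embedded factors (increasing order of indices)
is an upper Green and lower band matrix of order `r`. -/
theorem product_is_upperGreen_lowerBand (N r : ℕ) (hr : 0 < r) (hNr : r < N)
    (Wk : ℕ → Matrix (Fin (r + 1)) (Fin (r + 1)) ℂ) (Wlast : Matrix (Fin r) (Fin r) ℂ)
    (W : Matrix (Fin N) (Fin N) ℂ)
    (hW : W = prodAsc N r Wk * embedLast N r Wlast) :
    IsUpperGreen N r W ∧ IsLowerBand N r W := by
  classical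
  open GreenAux in
  have hInv := fun m => GreenAux.pfx_inv (N := N) (r := r) Wk m
  have hW' : W = GreenAux.pfx N r Wk (N - r) * embedLast N r Wlast := hW
  have band : IsLowerBand N r W := by
    intro i j hij
    rw [hW', GreenAux.mul_apply_col_one _ _ _ _
      (fun t => GreenAux.embedLast_apply_of_not Wlast t j (by have := i.isLt; omega))]
    exact (hInv (N - r)).2.2 i j hij
  refine ⟨?_, band⟩
  intro k hk1 hk2
  have hrN : r ≤ N := le_of_lt hNr
  set P : Matrix (Fin N) (Fin N) ℂ := GreenAux.pfx N r Wk (k - 1) with hP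
  set T : Matrix (Fin N) (Fin N) ℂ :=
    ((List.range' (1 + (k - 1)) (N - r - (k - 1))).map (fun k' => embed N r k' (Wk k'))).prod
    with hT
  set Q : Matrix (Fin N) (Fin N) ℂ := T * embedLast N r Wlast with hQ
  have hsplit : GreenAux.pfx N r Wk (N - r) = P * T := by
    have h1 : N - r = (N - r - (k - 1)) + (k - 1) := by omega
    conv_lhs => rw [h1]
    rw [hP, hT]
    unfold GreenAux.pfx
    rw [Nat.add_comm (N - r - (k - 1)) (k - 1), ← @List.range'_append_1 1 (k - 1) (N - r - (k - 1)), List.map_append, List.prod_append]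
  have hWQ : W = P * Q := by rw [hW', hsplit, hQ, mul_assoc]
  have hQrow : GreenAux.RowId (k - 1) Q := by
    rw [hQ]
    refine GreenAux.rowId_mul ?_ (GreenAux.rowId_embedLast (k - 1) (by omega) Wlast)
    rw [hT]
    apply GreenAux.rowId_prod
    intro M hM
    obtain ⟨k', hk', rfl⟩ := List.mem_map.mp hM
    have hk'' := List.mem_range'_1.mp hk'
    exact GreenAux.rowId_embed (k - 1) k' (by omega) _
  have entry : ∀ x y : Fin N, (x : ℕ) < k - 1 + r → k - 1 ≤ (y : ℕ) →
      W x y = ∑ u : Fin r,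
        P x ⟨k - 1 + (u : ℕ), by have := u.isLt; omega⟩ *
        Q ⟨k - 1 + (u : ℕ), by have := u.isLt; omega⟩ y := by
    intro x y hx hy
    rw [hWQ, Matrix.mul_apply]
    refine GreenAux.sum_reindex (by omega) (fun t => P x t * Q t y) ?_
    intro t ht
    show P x t * Q t y = 0
    rcases ht with ht | ht
    · rw [hQrow t y ht, Matrix.one_apply_ne (by intro h; rw [h] at ht; omega), mul_zero]
    · rw [show P = pfx N r Wk (k - 1) from hP, (hInv (k - 1)).2.1 x t (by omega),
        Matrix.one_apply_ne (by intro h; rw [← h] at ht; omega), zero_mul]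
  let A' : Matrix (Fin (k + r - 1)) (Fin r) ℂ := fun i u =>
    P ⟨(i : ℕ), by have := i.isLt; omega⟩ ⟨k - 1 + (u : ℕ), by have := u.isLt; omega⟩
  let B' : Matrix (Fin r) (Fin (N - k + 1)) ℂ := fun u j =>
    Q ⟨k - 1 + (u : ℕ), by have := u.isLt; omega⟩ ⟨k - 1 + (j : ℕ), by have := j.isLt; omega⟩
  have key : W.submatrix
      (fun i : Fin (k + r - 1) => (⟨(i : ℕ), by have := i.isLt; omega⟩ : Fin N))
      (fun j : Fin (N - k + 1) => (⟨k - 1 + (j : ℕ), by have := j.isLt; omega⟩ : Fin N))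
      = A' * B' := by
    ext i j
    rw [Matrix.submatrix_apply, Matrix.mul_apply]
    exact entry _ _ (show (i : ℕ) < k - 1 + r by have := i.isLt; omega)
      (show k - 1 ≤ k - 1 + (j : ℕ) by omega)
  refine le_trans (le_of_eq (congrArg Matrix.rank key)) ?_
  exact le_trans (Matrix.rank_mul_le_right A' B')
    (le_trans (Matrix.rank_le_card_height B') (Fintype.card_fin r).le)
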